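/- Let m ≥ 27 and ζ ≥ 4. Consider a random bipartite graph with vertex parts A = {a_1,…,a_m} and B = {b_1,…,b_m}, where for every i, j ∈ {1,…,m} the edge {a_i, b_j} is present independently with probability p = ζ·log(m)/m. Then the probability that the graph contains a perfect matching between A and B is greater than 1 − e·m^{−2(ζ−1)/3} / (1 − m^{−(ζ−1)/3}). -/

import Mathlib

open MeasureTheory
open scoped ENNReal NNReal

section Aux

variable {m : ℕ}

private lemma choose_le_two_pow' (m j : ℕ) : m.choose j ≤ 2 ^ m := by
  rcases le_or_gt j m with h | h
  · calc m.choose j ≤ ∑ i ∈ Finset.range (m + 1), m.choose i :=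
        Finset.single_le_sum (fun i _ => Nat.zero_le _) (Finset.mem_range.mpr (by omega))
      _ = 2 ^ m := Nat.sum_range_choose m
  · simp [Nat.choose_eq_zero_of_lt h]

/-- Hall-type reduction: if there is no perfect matching, there is a small violating
structure on one of the two sides. -/
private lemma hall_red (ω : Fin m × Fin m → Bool)
    (h : ¬ ∃ π : Equiv.Perm (Fin m), ∀ i, ω (i, π i) = true) :
    ∃ S T : Finset (Fin m), S.Nonempty ∧ 2 * S.card ≤ m + 1 ∧ T.card + 1 = S.card ∧
      ((∀ i ∈ S, ∀ j ∉ T, ω (i, j) = false) ∨ (∀ j ∈ S, ∀ i ∉ T, ω (i, j) = false)) := by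
  classical
  set r : Fin m → Finset (Fin m) := fun i => Finset.univ.filter fun j => ω (i, j) = true with hr
  have hall : ¬ ∀ s : Finset (Fin m), s.card ≤ (s.biUnion r).card := by
    intro hs
    obtain ⟨f, hfinj, hfr⟩ := (Finset.all_card_le_biUnion_card_iff_exists_injective r).mp hs
    refine h ⟨Equiv.ofBijective f ((Finite.injective_iff_bijective).mp hfinj), fun i => ?_⟩
    have := hfr i
    simp only [hr, Finset.mem_filter] at this
    simpa using this.2
  push_neg at hall
  obtain ⟨S, hS⟩ := hall
  set N := S.biUnion r with hN
  have hSm : S.card ≤ m := by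
    simpa using Finset.card_le_card (Finset.subset_univ S)
  have hmemN : ∀ i ∈ S, ∀ j, ω (i, j) = true → j ∈ N := by
    intro i hi j hj
    exact Finset.mem_biUnion.mpr ⟨i, hi, by simp [hr, hj]⟩
  by_cases hsmall : 2 * S.card ≤ m + 1
  · -- small violating set on the A side
    have hNcard : N.card + 1 ≤ S.card := hS
    have hle : (S.card - 1 - N.card) + N.card ≤ (Finset.univ : Finset (Fin m)).card := by
      simp only [Finset.card_univ, Fintype.card_fin]; omega
    obtain ⟨T, hNT, _, hTcard⟩ := Finset.exists_subsuperset_card_eq (n := S.card - 1 - N.card + N.card)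
      (Finset.subset_univ N) (by omega) hle
    refine ⟨S, T, ?_, hsmall, ?_, Or.inl ?_⟩
    · exact Finset.card_pos.mp (by omega)
    · omega
    · intro i hi j hj
      by_contra hb
      have hω : ω (i, j) = true := by
        cases hωij : ω (i, j) with
        | false => exact absurd hωij hb
        | true => rfl
      exact hj (hNT (hmemN i hi j hω))
  · -- big set: go to the B side
    have h2 : m + 2 ≤ 2 * S.card := by omega
    have hNcard2 : N.card + 1 ≤ S.card := hS
    have hNc : Nᶜ.card = m - N.card := by
      simp [Finset.card_compl]
    have hsub : m - S.card + 1 ≤ Nᶜ.card := by omega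
    obtain ⟨S', hS'sub, hS'card⟩ := Finset.exists_subset_card_eq hsub
    refine ⟨S', Sᶜ, ?_, ?_, ?_, Or.inr ?_⟩
    · refine Finset.card_pos.mp ?_; omega
    · omega
    · have : Sᶜ.card = m - S.card := by simp [Finset.card_compl]
      omega
    · intro j hj i hi
      have hiS : i ∈ S := by simpa using hi
      by_contra hb
      have hωij : ω (i, j) = true := by
        cases hc : ω (i, j) with
        | false => exact absurd hc hb
        | true => rfl
      have : j ∈ N := hmemN i hiS j hωij
      have : j ∈ Nᶜ := hS'sub hj
      simp only [Finset.mem_compl] at this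
      exact this (hmemN i hiS j hωij)

/-- Measure of a "these edges are all absent" cylinder. -/
private lemma meas_cyl (q : ℝ≥0) (hq : q ≤ 1) (E : Finset (Fin m × Fin m)) :
    (Measure.pi fun _ : Fin m × Fin m => (PMF.bernoulli q hq).toMeasure)
      {ω | ∀ e ∈ E, ω e = false} = (1 - (q : ℝ≥0∞)) ^ E.card := by
  classical
  have hset : {ω : Fin m × Fin m → Bool | ∀ e ∈ E, ω e = false}
      = Set.pi Set.univ (fun e => if e ∈ E then ({false} : Set Bool) else Set.univ) := by
    ext ω
    simp only [Set.mem_setOf_eq, Set.mem_pi, Set.mem_univ, forall_true_left]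
    refine forall_congr' fun e => ?_
    by_cases he : e ∈ E <;> simp [he]
  rw [hset, Measure.pi_pi]
  have hb : ((PMF.bernoulli q hq).toMeasure) {false} = 1 - (q : ℝ≥0∞) := by
    rw [PMF.toMeasure_apply_singleton _ _ (measurableSet_singleton false)]
    simp [PMF.bernoulli_apply, ENNReal.coe_sub]
  have : ∀ e : Fin m × Fin m,
      ((PMF.bernoulli q hq).toMeasure) (if e ∈ E then ({false} : Set Bool) else Set.univ)
      = if e ∈ E then (1 - (q : ℝ≥0∞)) else 1 := by
    intro e
    by_cases he : e ∈ E <;> simp [he, hb, PMF.bernoulli_apply, ENNReal.coe_sub,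
      add_tsub_cancel_of_le (ENNReal.coe_le_one_iff.mpr hq)]
  simp only [this]
  rw [Finset.prod_ite_mem, Finset.univ_inter, Finset.prod_const]

end Aux

section RealIneq

/-- The key term-wise estimate, at `ζ = 4` and with `log(1-p) ≤ -p` already applied. -/
private lemma key_exp (m k : ℕ) (hm : 27 ≤ m) (hk : 1 ≤ k) (hk2 : 2 * k ≤ m + 1) :
    2 * (m.choose k : ℝ) * (m.choose (k - 1) : ℝ)
      ≤ Real.exp 1 * (m : ℝ) ^ (4 * ((k : ℝ) * ((m : ℝ) - k + 1)) / m - (k + 1)) := by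
  have hM1 : (1 : ℝ) ≤ (m : ℝ) := by exact_mod_cast (by omega : 1 ≤ m)
  have hM0 : (0 : ℝ) < (m : ℝ) := by linarith
  have h2e : (2 : ℝ) ≤ Real.exp 1 := by
    have := Real.add_one_le_exp (1 : ℝ); linarith
  rcases le_or_gt (4 * k) (m + 4) with hcase | hcase
  · -- small k : use choose ≤ m^k
    have hc1 : (m.choose k : ℝ) ≤ (m : ℝ) ^ k := by
      exact_mod_cast Nat.choose_le_pow m k
    have hc2 : (m.choose (k - 1) : ℝ) ≤ (m : ℝ) ^ (k - 1) := by
      exact_mod_cast Nat.choose_le_pow m (k - 1)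
    have hpow : (m : ℝ) ^ k * (m : ℝ) ^ (k - 1) = (m : ℝ) ^ (2 * k - 1) := by
      rw [← pow_add]; congr 1; omega
    have hexp : ((2 * k - 1 : ℕ) : ℝ) ≤ 4 * ((k : ℝ) * ((m : ℝ) - k + 1)) / m - (k + 1) := by
      rw [le_sub_iff_add_le, le_div_iff₀ hM0]
      have hcast : ((2 * k - 1 : ℕ) : ℝ) = 2 * (k : ℝ) - 1 := by
        push_cast [(by omega : 1 ≤ 2 * k)]; ring
      rw [hcast]
      have h4 : (4 : ℝ) * k ≤ (m : ℝ) + 4 := by exact_mod_cast hcase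
      have hk1 : (1 : ℝ) ≤ (k : ℝ) := by exact_mod_cast hk
      nlinarith [mul_nonneg (le_of_lt hM0) (by linarith : (0:ℝ) ≤ (k:ℝ))]
    calc 2 * (m.choose k : ℝ) * (m.choose (k - 1) : ℝ)
        ≤ 2 * ((m : ℝ) ^ k * (m : ℝ) ^ (k - 1)) := by
          have h1 : (0 : ℝ) ≤ (m.choose k : ℝ) := by positivity
          have h2 : (0 : ℝ) ≤ (m.choose (k - 1) : ℝ) := by positivity
          nlinarith [pow_nonneg (le_of_lt hM0) k, pow_nonneg (le_of_lt hM0) (k-1)]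
      _ = 2 * (m : ℝ) ^ (2 * k - 1) := by rw [hpow]
      _ = 2 * (m : ℝ) ^ (((2 * k - 1 : ℕ) : ℝ)) := by rw [Real.rpow_natCast]
      _ ≤ Real.exp 1 * (m : ℝ) ^ (4 * ((k : ℝ) * ((m : ℝ) - k + 1)) / m - (k + 1)) := by
          have := Real.rpow_le_rpow_of_exponent_le hM1 hexp
          have hpos : (0:ℝ) ≤ (m : ℝ) ^ (((2 * k - 1 : ℕ) : ℝ)) := (Real.rpow_pos_of_pos hM0 _).le
          nlinarith [Real.rpow_pos_of_pos hM0 (4 * ((k : ℝ) * ((m : ℝ) - k + 1)) / m - (k + 1))]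
  · -- large k : use choose ≤ 2^m
    have hc1 : (m.choose k : ℝ) ≤ (2 : ℝ) ^ m := by
      exact_mod_cast choose_le_two_pow' m k
    have hc2 : (m.choose (k - 1) : ℝ) ≤ (2 : ℝ) ^ m := by
      exact_mod_cast choose_le_two_pow' m (k - 1)
    have hexp : (m : ℝ) / 2 ≤ 4 * ((k : ℝ) * ((m : ℝ) - k + 1)) / m - (k + 1) := by
      rw [le_sub_iff_add_le, le_div_iff₀ hM0]
      have h4 : (m : ℝ) + 5 ≤ 4 * (k : ℝ) := by exact_mod_cast (by omega : m + 5 ≤ 4 * k)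
      have h2k : 2 * (k : ℝ) ≤ (m : ℝ) + 1 := by exact_mod_cast hk2
      nlinarith [mul_nonneg (sub_nonneg.mpr (by linarith : (m:ℝ) ≤ 4 * k)) (sub_nonneg.mpr (by linarith : 2 * (k:ℝ) ≤ (m:ℝ) + 2))]
    have h4m : (4 : ℝ) ^ m ≤ (m : ℝ) ^ ((m : ℝ) / 2) := by
      have h16 : (16 : ℝ) ^ ((m : ℝ) / 2) ≤ (m : ℝ) ^ ((m : ℝ) / 2) := by
        apply Real.rpow_le_rpow (by norm_num) (by exact_mod_cast (by omega : 16 ≤ m)) (by positivity)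
      have h164 : (16 : ℝ) ^ ((m : ℝ) / 2) = (4 : ℝ) ^ m := by
        rw [show (16 : ℝ) = (4 : ℝ) ^ (2 : ℝ) by
              rw [show (2:ℝ) = ((2:ℕ):ℝ) by norm_num, Real.rpow_natCast]; norm_num,
          ← Real.rpow_mul (by norm_num : (0:ℝ) ≤ 4)]
        rw [show (2 : ℝ) * ((m : ℝ) / 2) = ((m : ℕ) : ℝ) by ring, Real.rpow_natCast]
      linarith
    calc 2 * (m.choose k : ℝ) * (m.choose (k - 1) : ℝ)
        ≤ 2 * ((2 : ℝ) ^ m * (2 : ℝ) ^ m) := by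
          have h1 : (0 : ℝ) ≤ (m.choose k : ℝ) := by positivity
          have h2 : (0 : ℝ) ≤ (m.choose (k - 1) : ℝ) := by positivity
          nlinarith [pow_nonneg (by norm_num : (0:ℝ) ≤ 2) m]
      _ = 2 * (4 : ℝ) ^ m := by rw [← mul_pow]; norm_num
      _ ≤ Real.exp 1 * (m : ℝ) ^ ((m : ℝ) / 2) := by
          nlinarith [Real.rpow_pos_of_pos hM0 ((m:ℝ)/2), pow_pos (by norm_num : (0:ℝ) < 4) m]
      _ ≤ Real.exp 1 * (m : ℝ) ^ (4 * ((k : ℝ) * ((m : ℝ) - k + 1)) / m - (k + 1)) := by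
          have := Real.rpow_le_rpow_of_exponent_le hM1 hexp
          nlinarith [Real.exp_pos (1:ℝ)]

/-- Full term-wise estimate. -/
private lemma key_term (m k : ℕ) (hm : 27 ≤ m) (hk : 1 ≤ k) (hk2 : 2 * k ≤ m + 1)
    (ζ : ℝ) (hζ : 4 ≤ ζ) (p : ℝ) (hp : p = ζ * Real.log m / m) (hp1 : p ≤ 1) :
    2 * (m.choose k : ℝ) * (m.choose (k - 1) : ℝ) * (1 - p) ^ (k * (m - k + 1))
      ≤ Real.exp 1 * ((m : ℝ) ^ (-((ζ - 1) / 3))) ^ (k + 1) := by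
  have hM1 : (1 : ℝ) ≤ (m : ℝ) := by exact_mod_cast (by omega : 1 ≤ m)
  have hM0 : (0 : ℝ) < (m : ℝ) := by linarith
  have hL0 : 0 ≤ Real.log m := Real.log_nonneg hM1
  have hp0 : 0 ≤ p := by rw [hp]; positivity
  have h1p : 0 ≤ 1 - p := by linarith
  have hkm : k ≤ m := by omega
  have hK1 : (1 : ℝ) ≤ (k : ℝ) := by exact_mod_cast hk
  have h2K : 2 * (k : ℝ) ≤ (m : ℝ) + 1 := by exact_mod_cast hk2
  set K : ℝ := (k : ℝ) with hK
  set E : ℝ := K * ((m : ℝ) - K + 1) with hE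
  have hcastE : ((k * (m - k + 1) : ℕ) : ℝ) = E := by
    rw [hE, hK]; push_cast [hkm]; ring
  have hE0 : 0 ≤ E := by
    rw [hE]; have : (0:ℝ) ≤ (m : ℝ) - K + 1 := by linarith
    positivity
  -- Step 1: (1-p)^n ≤ m ^ (-(ζ * E / m))
  have step1 : (1 - p) ^ (k * (m - k + 1)) ≤ (m : ℝ) ^ (-(ζ * E / (m : ℝ))) := by
    have h1 : (1 - p : ℝ) ≤ Real.exp (-p) := by
      have := Real.add_one_le_exp (-p); linarith
    calc (1 - p) ^ (k * (m - k + 1)) ≤ (Real.exp (-p)) ^ (k * (m - k + 1)) :=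
          pow_le_pow_left₀ h1p h1 _
      _ = Real.exp (-(p * ((k * (m - k + 1) : ℕ) : ℝ))) := by
          rw [← Real.exp_nat_mul]; ring_nf
      _ = (m : ℝ) ^ (-(ζ * E / (m : ℝ))) := by
          rw [Real.rpow_def_of_pos hM0]
          congr 1
          rw [hcastE, hp]
          field_simp
  -- Step 2: exponent comparison to ζ = 4
  have hcoef : (K + 1) * (m : ℝ) ≤ 3 * E := by
    rw [hE]
    have hm2K : 2 * K - 1 ≤ (m : ℝ) := by linarith
    nlinarith [sq_nonneg (K - 1), mul_nonneg (sub_nonneg.mpr hm2K) (by linarith : (0:ℝ) ≤ 2 * K - 1)]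
  have hζexp : 4 * E / (m : ℝ) - (K + 1) ≤ ζ * E / (m : ℝ) - (ζ - 1) * (K + 1) / 3 := by
    have hne : (m : ℝ) ≠ 0 := ne_of_gt hM0
    have heq : ζ * E / (m : ℝ) - (ζ - 1) * (K + 1) / 3 - (4 * E / (m : ℝ) - (K + 1))
        = (ζ - 4) * (3 * E - (K + 1) * (m : ℝ)) / (3 * (m : ℝ)) := by
      field_simp
      ring
    have hnn : 0 ≤ (ζ - 4) * (3 * E - (K + 1) * (m : ℝ)) / (3 * (m : ℝ)) :=
      div_nonneg (mul_nonneg (by linarith) (by linarith)) (by positivity)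
    linarith [heq ▸ hnn]
  -- Combine
  have hmain : 2 * (m.choose k : ℝ) * (m.choose (k - 1) : ℝ)
      ≤ Real.exp 1 * (m : ℝ) ^ (ζ * E / (m : ℝ) - (ζ - 1) * (K + 1) / 3) := by
    calc 2 * (m.choose k : ℝ) * (m.choose (k - 1) : ℝ)
        ≤ Real.exp 1 * (m : ℝ) ^ (4 * E / (m : ℝ) - (K + 1)) := by
          have := key_exp m k hm hk hk2
          simpa [hE, hK] using this
      _ ≤ _ := by
          have := Real.rpow_le_rpow_of_exponent_le hM1 hζexp
          nlinarith [Real.exp_pos (1:ℝ)]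
  have hxk : ((m : ℝ) ^ (-((ζ - 1) / 3))) ^ (k + 1)
      = (m : ℝ) ^ (-((ζ - 1) * (K + 1) / 3)) := by
    rw [← Real.rpow_natCast ((m : ℝ) ^ (-((ζ - 1) / 3))) (k + 1),
      ← Real.rpow_mul hM0.le]
    congr 1
    push_cast [hK]
    ring
  rw [hxk]
  calc 2 * (m.choose k : ℝ) * (m.choose (k - 1) : ℝ) * (1 - p) ^ (k * (m - k + 1))
      ≤ (Real.exp 1 * (m : ℝ) ^ (ζ * E / (m : ℝ) - (ζ - 1) * (K + 1) / 3))
          * (m : ℝ) ^ (-(ζ * E / (m : ℝ))) := by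
        apply mul_le_mul hmain step1 (by positivity)
        positivity
    _ = Real.exp 1 * (m : ℝ) ^ (-((ζ - 1) * (K + 1) / 3)) := by
        rw [mul_assoc, ← Real.rpow_add hM0]
        congr 2
        ring

private lemma geom_bound (x : ℝ) (hx0 : 0 < x) (hx1 : x < 1) (K : ℕ) :
    ∑ k ∈ Finset.Icc 1 K, x ^ (k + 1) < x ^ 2 / (1 - x) := by
  have h1x : 0 < 1 - x := by linarith
  have hsum : ∀ n : ℕ, ∑ k ∈ Finset.Icc 1 n, x ^ (k + 1) = x ^ 2 * ((1 - x ^ n) / (1 - x)) := by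
    intro n
    induction n with
    | zero => simp
    | succ n ih =>
      rw [Finset.sum_Icc_succ_top (by omega), ih]
      field_simp
      ring
  rw [hsum K]
  have hxK : 0 < x ^ K := pow_pos hx0 K
  have hre : x ^ 2 * ((1 - x ^ K) / (1 - x)) = x ^ 2 * (1 - x ^ K) / (1 - x) := by ring
  rw [hre, div_lt_div_iff₀ h1x h1x]
  nlinarith [mul_pos (mul_pos (pow_pos hx0 2) h1x) hxK]

end RealIneq

theorem stmt_13 (m : ℕ) (hm : 27 ≤ m) (ζ : ℝ) (hζ : 4 ≤ ζ)
    (p : ℝ) (hp : p = ζ * Real.log m / m) (hp1 : p ≤ 1) :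
    ENNReal.ofReal
        (1 - Real.exp 1 * (m : ℝ) ^ (-(2 * (ζ - 1) / 3)) /
          (1 - (m : ℝ) ^ (-((ζ - 1) / 3)))) <
      (Measure.pi fun _ : Fin m × Fin m =>
          (PMF.bernoulli (Real.toNNReal p) (Real.toNNReal_le_one.mpr hp1)).toMeasure)
        {ω | ∃ π : Equiv.Perm (Fin m), ∀ i, ω (i, π i) = true} := by
  classical
  have hM1 : (1 : ℝ) ≤ (m : ℝ) := by exact_mod_cast (by omega : 1 ≤ m)
  have hM0 : (0 : ℝ) < (m : ℝ) := by linarith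
  have hM27 : (27 : ℝ) ≤ (m : ℝ) := by exact_mod_cast hm
  have hL0 : 0 ≤ Real.log m := Real.log_nonneg hM1
  have hp0 : 0 ≤ p := by rw [hp]; positivity
  have h1p : 0 ≤ 1 - p := by linarith
  set μ : Measure (Fin m × Fin m → Bool) := Measure.pi fun _ : Fin m × Fin m =>
      (PMF.bernoulli (Real.toNNReal p) (Real.toNNReal_le_one.mpr hp1)).toMeasure with hμ
  set Ev : Set (Fin m × Fin m → Bool) :=
      {ω | ∃ π : Equiv.Perm (Fin m), ∀ i, ω (i, π i) = true} with hEv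
  -- abbreviations
  set x : ℝ := (m : ℝ) ^ (-((ζ - 1) / 3)) with hx
  have hx0 : 0 < x := Real.rpow_pos_of_pos hM0 _
  have hx27 : x ≤ 1 / 27 := by
    have h1 : x ≤ (m : ℝ) ^ (-1 : ℝ) :=
      Real.rpow_le_rpow_of_exponent_le hM1 (by linarith)
    have h2 : (m : ℝ) ^ (-1 : ℝ) = ((m : ℝ))⁻¹ := Real.rpow_neg_one _
    have h3 : ((m : ℝ))⁻¹ ≤ 1 / 27 := by
      rw [inv_eq_one_div]
      apply div_le_div_of_nonneg_left (by norm_num) (by norm_num) hM27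
    linarith [h1, h2 ▸ h1]
  have hx1 : x < 1 := lt_of_le_of_lt hx27 (by norm_num)
  have h1x : 0 < 1 - x := by linarith
  have hx2 : x ^ 2 = (m : ℝ) ^ (-(2 * (ζ - 1) / 3)) := by
    rw [hx, ← Real.rpow_natCast ((m : ℝ) ^ (-((ζ - 1) / 3))) 2, ← Real.rpow_mul hM0.le]
    congr 1
    push_cast
    ring
  set c : ℝ := Real.exp 1 * x ^ 2 / (1 - x) with hc
  have hgoalc : Real.exp 1 * (m : ℝ) ^ (-(2 * (ζ - 1) / 3)) /
      (1 - (m : ℝ) ^ (-((ζ - 1) / 3))) = c := by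
    rw [hc, hx2, hx]
  rw [hgoalc]
  have hexp1 : Real.exp 1 < 2.7182818286 := Real.exp_one_lt_d9
  have hexp0 : (0 : ℝ) < Real.exp 1 := Real.exp_pos 1
  have hc1 : c < 1 := by
    rw [hc, div_lt_one h1x]
    nlinarith [sq_nonneg x]
  have hc0 : 0 < c := by
    rw [hc]; positivity
  -- measurability of the matching event
  have hEmeas : MeasurableSet Ev := by
    have : Ev = ⋃ π : Equiv.Perm (Fin m), ⋂ i : Fin m,
        (fun ω : Fin m × Fin m → Bool => ω (i, π i)) ⁻¹' {true} := by
      ext ω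
      simp [hEv, Set.mem_iUnion, Set.mem_iInter]
    rw [this]
    exact MeasurableSet.iUnion fun π => MeasurableSet.iInter fun i =>
      (measurable_pi_apply (i, π i)) (measurableSet_singleton true)
  -- the index sets and events for the union bound
  set K : ℕ := (m + 1) / 2 with hK
  set PROD : ℕ → Finset (Finset (Fin m) × Finset (Fin m)) := fun k =>
      Finset.powersetCard k (Finset.univ : Finset (Fin m)) ×ˢ
      Finset.powersetCard (k - 1) (Finset.univ : Finset (Fin m)) with hPROD
  set EA : Finset (Fin m) × Finset (Fin m) → Set (Fin m × Fin m → Bool) := fun ST =>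
      {ω | ∀ e ∈ ST.1 ×ˢ ST.2ᶜ, ω e = false} with hEA
  set EB : Finset (Fin m) × Finset (Fin m) → Set (Fin m × Fin m → Bool) := fun ST =>
      {ω | ∀ e ∈ ST.2ᶜ ×ˢ ST.1, ω e = false} with hEB
  -- covering of the complement
  have cover : Evᶜ ⊆ ⋃ k ∈ Finset.Icc 1 K, ⋃ ST ∈ PROD k, (EA ST ∪ EB ST) := by
    intro ω hω
    have hno : ¬ ∃ π : Equiv.Perm (Fin m), ∀ i, ω (i, π i) = true := hω
    obtain ⟨S, T, hne, h2card, hTS, hor⟩ := hall_red ω hno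
    have hScard : 1 ≤ S.card := Finset.card_pos.mpr hne
    refine Set.mem_iUnion₂.mpr ⟨S.card, Finset.mem_Icc.mpr ⟨hScard, by omega⟩, ?_⟩
    refine Set.mem_iUnion₂.mpr ⟨(S, T), ?_, ?_⟩
    · rw [hPROD]
      exact Finset.mem_product.mpr ⟨Finset.mem_powersetCard.mpr ⟨Finset.subset_univ _, rfl⟩,
        Finset.mem_powersetCard.mpr ⟨Finset.subset_univ _, show T.card = S.card - 1 by omega⟩⟩
    · rcases hor with h | h
      · left
        intro e he
        rw [hEA] at *
        simp only [Finset.mem_product, Finset.mem_compl] at he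
        have := h e.1 he.1 e.2 he.2
        simpa using this
      · right
        intro e he
        simp only [Finset.mem_product, Finset.mem_compl] at he
        have := h e.2 he.2 e.1 he.1
        simpa using this
  -- the real summands
  set R : ℕ → ℝ := fun k =>
      2 * (m.choose k : ℝ) * (m.choose (k - 1) : ℝ) * (1 - p) ^ (k * (m - k + 1)) with hR
  have hRnonneg : ∀ k, 0 ≤ R k := by
    intro k
    rw [hR]
    positivity
  -- evaluate the measure of each cylinder event
  have hEAval : ∀ k ∈ Finset.Icc 1 K, ∀ ST ∈ PROD k,
      μ (EA ST) = (1 - ENNReal.ofReal p) ^ (k * (m - k + 1))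
      ∧ μ (EB ST) = (1 - ENNReal.ofReal p) ^ (k * (m - k + 1)) := by
    intro k hk ST hST
    rw [Finset.mem_Icc] at hk
    rw [hPROD] at hST
    simp only [Finset.mem_product, Finset.mem_powersetCard] at hST
    have hS : ST.1.card = k := hST.1.2
    have hT : ST.2.card = k - 1 := hST.2.2
    have hTc : ST.2ᶜ.card = m - (k - 1) := by
      simp [Finset.card_compl, hT]
    have hmk : m - (k - 1) = m - k + 1 := by omega
    have hcard1 : (ST.1 ×ˢ ST.2ᶜ).card = k * (m - k + 1) := by
      rw [Finset.card_product, hS, hTc, hmk]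
    have hcard2 : (ST.2ᶜ ×ˢ ST.1).card = k * (m - k + 1) := by
      rw [Finset.card_product, hS, hTc, hmk, Nat.mul_comm]
    constructor
    · rw [hμ, hEA, ← hcard1]
      exact meas_cyl (Real.toNNReal p) (Real.toNNReal_le_one.mpr hp1) _
    · rw [hμ, hEB, ← hcard2]
      exact meas_cyl (Real.toNNReal p) (Real.toNNReal_le_one.mpr hp1) _
  -- ENNReal power as ofReal
  have h1q : (1 : ℝ≥0∞) - ENNReal.ofReal p = ENNReal.ofReal (1 - p) := by
    rw [ENNReal.ofReal_sub 1 hp0, ENNReal.ofReal_one]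
  -- the union bound
  have hunion : μ Evᶜ ≤ ENNReal.ofReal (∑ k ∈ Finset.Icc 1 K, R k) := by
    calc μ Evᶜ ≤ μ (⋃ k ∈ Finset.Icc 1 K, ⋃ ST ∈ PROD k, (EA ST ∪ EB ST)) :=
          measure_mono cover
      _ ≤ ∑ k ∈ Finset.Icc 1 K, μ (⋃ ST ∈ PROD k, (EA ST ∪ EB ST)) :=
          measure_biUnion_finset_le _ _
      _ ≤ ∑ k ∈ Finset.Icc 1 K, ∑ ST ∈ PROD k, μ (EA ST ∪ EB ST) :=
          Finset.sum_le_sum fun k _ => measure_biUnion_finset_le _ _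
      _ ≤ ∑ k ∈ Finset.Icc 1 K, ∑ ST ∈ PROD k, (μ (EA ST) + μ (EB ST)) :=
          Finset.sum_le_sum fun k _ => Finset.sum_le_sum fun ST _ => measure_union_le _ _
      _ = ∑ k ∈ Finset.Icc 1 K, ENNReal.ofReal (R k) := by
          refine Finset.sum_congr rfl fun k hk => ?_
          have hval := hEAval k hk
          calc ∑ ST ∈ PROD k, (μ (EA ST) + μ (EB ST))
              = ∑ _ST ∈ PROD k, (2 * (1 - ENNReal.ofReal p) ^ (k * (m - k + 1))) := by
                refine Finset.sum_congr rfl fun ST hST => ?_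
                rw [(hval ST hST).1, (hval ST hST).2, two_mul]
            _ = ((PROD k).card : ℝ≥0∞) * (2 * (1 - ENNReal.ofReal p) ^ (k * (m - k + 1))) := by
                rw [Finset.sum_const, nsmul_eq_mul]
            _ = ENNReal.ofReal (R k) := by
                rw [hPROD]
                simp only [Finset.card_product, Finset.card_powersetCard, Finset.card_univ,
                  Fintype.card_fin]
                rw [h1q, ← ENNReal.ofReal_pow h1p, hR]
                rw [show (2 : ℝ≥0∞) = ENNReal.ofReal (2 : ℝ) by simp]
                rw [← ENNReal.ofReal_mul (by norm_num)]
                rw [show ((m.choose k * m.choose (k - 1) : ℕ) : ℝ≥0∞)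
                    = ENNReal.ofReal ((m.choose k * m.choose (k - 1) : ℕ) : ℝ) by
                  rw [ENNReal.ofReal_natCast]]
                rw [← ENNReal.ofReal_mul (by positivity)]
                congr 1
                push_cast
                ring
      _ = ENNReal.ofReal (∑ k ∈ Finset.Icc 1 K, R k) := by
          rw [ENNReal.ofReal_sum_of_nonneg fun k _ => hRnonneg k]
  -- the real estimate
  have hreal : ∑ k ∈ Finset.Icc 1 K, R k < c := by
    have hterm : ∀ k ∈ Finset.Icc 1 K, R k ≤ Real.exp 1 * x ^ (k + 1) := by
      intro k hk
      rw [Finset.mem_Icc] at hk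
      rw [hR, hx]
      exact key_term m k hm hk.1 (by omega) ζ hζ p hp hp1
    calc ∑ k ∈ Finset.Icc 1 K, R k ≤ ∑ k ∈ Finset.Icc 1 K, Real.exp 1 * x ^ (k + 1) :=
          Finset.sum_le_sum hterm
      _ = Real.exp 1 * ∑ k ∈ Finset.Icc 1 K, x ^ (k + 1) := by rw [Finset.mul_sum]
      _ < Real.exp 1 * (x ^ 2 / (1 - x)) := by
          exact (mul_lt_mul_iff_right₀ hexp0).mpr (geom_bound x hx0 hx1 K)
      _ = c := by rw [hc]; ring
  have hStot0 : 0 ≤ ∑ k ∈ Finset.Icc 1 K, R k := Finset.sum_nonneg fun k _ => hRnonneg k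
  set Stot : ℝ := ∑ k ∈ Finset.Icc 1 K, R k with hStot
  -- final assembly
  have hprob : μ Ev + μ Evᶜ = 1 := by
    rw [measure_add_measure_compl hEmeas]
    exact measure_univ
  have hEveq : μ Ev = 1 - μ Evᶜ := by
    refine ENNReal.eq_sub_of_add_eq (measure_ne_top μ _) hprob
  calc ENNReal.ofReal (1 - c) < ENNReal.ofReal (1 - Stot) := by
        refine (ENNReal.ofReal_lt_ofReal_iff (by linarith)).mpr (by linarith)
    _ = 1 - ENNReal.ofReal Stot := by
        rw [ENNReal.ofReal_sub 1 hStot0, ENNReal.ofReal_one]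
    _ ≤ 1 - μ Evᶜ := tsub_le_tsub_left hunion 1
    _ = μ Ev := hEveq.symm
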